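/- Let Γ be a finite graph with nonnegative real edge weights and four distinguished dangling edges i₁, i₂, i₃, i₄. For X a subset of {i₁,i₂,i₃,i₄}, let f(X) be the sum over perfect matchings of Γ that use exactly the dangling edges in X, of the product of weights of matched edges. Suppose f is supported on subsets of even size (even parity). Then f({i₁,i₂})·f({i₃,i₄}) ≤ f({i₂,i₃})·f({i₁,i₄}) + f({i₂,i₄})·f({i₁,i₃}) + f(∅)·f({i₁,i₂,i₃,i₄}). -/

import Mathlib

open scoped Classical symmDiff
set_option linter.unusedSectionVars false
set_option linter.unusedVariables false
set_option maxHeartbeats 1000000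
open Finset

/-- `IsPM G dangle M X` : `M` is a set of internal edges of the matchgate `G` forming,
together with the dangling edges in `X` (dangling edge `i` is attached to the internal
vertex `dangle i`), a perfect matching: every internal vertex is covered exactly once. -/
def IsPM {V : Type} [DecidableEq V] (G : SimpleGraph V) [Fintype V] [DecidableRel G.Adj]
    (dangle : Fin 4 → V) (M : Finset (Sym2 V)) (X : Finset (Fin 4)) : Prop :=
  M ⊆ G.edgeFinset ∧
    ∀ v : V, (M.filter (fun e => v ∈ e)).card + (X.filter (fun i => dangle i = v)).card = 1

/-- The signature of a 4-ary matchgate: `matchgateSig G w dangle X` is the sum, over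
perfect matchings whose dangling-edge pattern is exactly `X`, of the product of the
weights of the matched internal edges. -/
noncomputable def matchgateSig {V : Type} [DecidableEq V] (G : SimpleGraph V) [Fintype V]
    [DecidableRel G.Adj] (w : Sym2 V → ℝ) (dangle : Fin 4 → V) (X : Finset (Fin 4)) : ℝ :=
  ∑ M ∈ (Finset.univ : Finset (Finset (Sym2 V))),
    if IsPM G dangle M X then ∏ e ∈ M, w e else 0


namespace MGaux
variable {V : Type} [DecidableEq V] [Fintype V]

/-- degree of a vertex in an edge finset -/
noncomputable def edeg (M : Finset (Sym2 V)) (v : V) : ℕ := (M.filter (fun e => v ∈ e)).card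

lemma edeg_eq_zero_iff {M : Finset (Sym2 V)} {v : V} :
    edeg M v = 0 ↔ ∀ e ∈ M, v ∉ e := by
  simp [edeg, Finset.card_eq_zero, Finset.filter_eq_empty_iff]

lemma edeg_mono {M N : Finset (Sym2 V)} (h : M ⊆ N) (v : V) : edeg M v ≤ edeg N v :=
  Finset.card_le_card (Finset.filter_subset_filter _ h)

lemma edeg_union_of_disjoint {M N : Finset (Sym2 V)} (h : Disjoint M N) (v : V) :
    edeg (M ∪ N) v = edeg M v + edeg N v := by
  unfold edeg
  rw [Finset.filter_union, Finset.card_union_of_disjoint (Finset.disjoint_filter_filter h)]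

lemma edeg_sdiff_add (M N : Finset (Sym2 V)) (v : V) :
    edeg (M \ N) v + edeg (M ∩ N) v = edeg M v := by
  rw [← edeg_union_of_disjoint (Finset.disjoint_sdiff_inter M N), Finset.sdiff_union_inter]

lemma symmDiff_eq_union (M N : Finset (Sym2 V)) : M ∆ N = (M \ N) ∪ (N \ M) := by
  ext e; simp [Finset.mem_symmDiff, Finset.mem_union, Finset.mem_sdiff]

lemma edeg_symmDiff (M N : Finset (Sym2 V)) (v : V) :
    edeg (M ∆ N) v = edeg (M \ N) v + edeg (N \ M) v := by
  rw [symmDiff_eq_union, edeg_union_of_disjoint]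
  exact disjoint_sdiff_sdiff

lemma card_mem_filter_eq_two {e : Sym2 V} (he : ¬ e.IsDiag) :
    (Finset.univ.filter (fun v => v ∈ e)).card = 2 := by
  induction e with
  | _ a b =>
    have hab : a ≠ b := by simpa using he
    have : (Finset.univ.filter (fun v => v ∈ (s(a,b) : Sym2 V))) = {a, b} := by
      ext v; simp [Sym2.mem_iff]
    rw [this, Finset.card_insert_of_notMem (by simpa using hab), Finset.card_singleton]

lemma sum_edeg (P : Finset (Sym2 V)) (hP : ∀ e ∈ P, ¬ e.IsDiag) :
    ∑ v, edeg P v = 2 * P.card := by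
  unfold edeg
  simp only [Finset.card_filter]
  rw [Finset.sum_comm]
  rw [Finset.sum_congr rfl (fun e he => ?_), Finset.sum_const, smul_eq_mul, mul_comm]
  rw [← Finset.card_filter]
  exact card_mem_filter_eq_two (hP e he)

/-- In a graph given by a finite edge set, the set of vertices reachable from `v₀`
has cardinality at most (number of edges) + 1. -/
lemma reach_card_le (P : Finset (Sym2 V)) (v₀ : V) :
    (Finset.univ.filter fun v =>
      (SimpleGraph.fromEdgeSet (↑P : Set (Sym2 V))).Reachable v₀ v).card ≤ P.card + 1 := by
  set H := SimpleGraph.fromEdgeSet (↑P : Set (Sym2 V)) with hH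
  have key : ∀ v, H.Reachable v₀ v → v ≠ v₀ →
      ∃ u, H.Adj v u ∧ H.dist u v₀ < H.dist v v₀ := by
    intro v hv hne
    obtain ⟨p, hp⟩ := (hv.symm).exists_walk_length_eq_dist
    cases p with
    | nil => exact absurd rfl hne
    | @cons _ u _ h q =>
      refine ⟨u, h, ?_⟩
      have h1 : H.dist u v₀ ≤ q.length := SimpleGraph.dist_le q
      have h2 : q.length + 1 = H.dist v v₀ := by simpa using hp
      omega
  classical
  set f : V → Sym2 V := fun v =>
    if h : H.Reachable v₀ v ∧ v ≠ v₀ then s(v, (key v h.1 h.2).choose) else s(v₀, v₀) with hf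
  have hcard : ((Finset.univ.filter fun v => H.Reachable v₀ v).erase v₀).card ≤ P.card := by
    apply Finset.card_le_card_of_injOn f
    · intro v hv
      rw [Finset.mem_coe, Finset.mem_erase, Finset.mem_filter] at hv
      have hcond : H.Reachable v₀ v ∧ v ≠ v₀ := ⟨hv.2.2, hv.1⟩
      have hadj := (key v hcond.1 hcond.2).choose_spec.1
      rw [SimpleGraph.fromEdgeSet_adj] at hadj
      simp only [hf, dif_pos hcond]
      exact_mod_cast hadj.1
    · intro v hv w hw hvw
      rw [Finset.coe_erase, Set.mem_diff, Finset.mem_coe, Finset.mem_filter] at hv hw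
      have hcv : H.Reachable v₀ v ∧ v ≠ v₀ := ⟨hv.1.2, by simpa using hv.2⟩
      have hcw : H.Reachable v₀ w ∧ w ≠ v₀ := ⟨hw.1.2, by simpa using hw.2⟩
      simp only [hf, dif_pos hcv, dif_pos hcw, Sym2.eq_iff] at hvw
      rcases hvw with ⟨h1, _⟩ | ⟨h1, h2⟩
      · exact h1
      · exfalso
        have d1 := (key v hcv.1 hcv.2).choose_spec.2
        have d2 := (key w hcw.1 hcw.2).choose_spec.2
        rw [h2] at d1
        rw [← h1] at d2
        omega
  by_cases hv₀ : v₀ ∈ (Finset.univ.filter fun v => H.Reachable v₀ v)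
  · rw [← Finset.card_erase_add_one hv₀]; omega
  · rw [Finset.erase_eq_of_notMem hv₀] at hcard; convert Nat.le_succ_of_le hcard using 3

/-- reachability from v₀ in the graph with edge set D -/
def Rch (D : Finset (Sym2 V)) (v₀ : V) (v : V) : Prop :=
  (SimpleGraph.fromEdgeSet (↑D : Set (Sym2 V))).Reachable v₀ v

/-- the set of edges of D in the connected component of v₀ -/
noncomputable def comp (D : Finset (Sym2 V)) (v₀ : V) : Finset (Sym2 V) :=
  D.filter (fun e => ∃ x ∈ e, Rch D v₀ x)

lemma comp_subset (D : Finset (Sym2 V)) (v₀ : V) : comp D v₀ ⊆ D := Finset.filter_subset _ _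

lemma rch_refl (D : Finset (Sym2 V)) (v₀ : V) : Rch D v₀ v₀ := SimpleGraph.Reachable.refl _

lemma rch_of_mem_comp {D : Finset (Sym2 V)} {v₀ : V} {e : Sym2 V} {x : V}
    (he : e ∈ comp D v₀) (hx : x ∈ e) : Rch D v₀ x := by
  rw [comp, Finset.mem_filter] at he
  obtain ⟨y, hy, hry⟩ := he.2
  by_cases hxy : x = y
  · rwa [hxy]
  · have hadj : (SimpleGraph.fromEdgeSet (↑D : Set (Sym2 V))).Adj y x := by
      rw [SimpleGraph.fromEdgeSet_adj]
      refine ⟨?_, fun h => hxy h.symm⟩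
      have : e = s(y, x) := ((Sym2.mem_and_mem_iff (fun h => hxy h.symm)).mp ⟨hy, hx⟩)
      rw [← this]; exact_mod_cast he.1
    exact hry.trans hadj.reachable

lemma mem_comp {D : Finset (Sym2 V)} {v₀ : V} {e : Sym2 V} {x : V}
    (heD : e ∈ D) (hx : x ∈ e) (hr : Rch D v₀ x) : e ∈ comp D v₀ := by
  rw [comp, Finset.mem_filter]; exact ⟨heD, x, hx, hr⟩

lemma filter_comp_of_rch {D : Finset (Sym2 V)} {v₀ v : V} (h : Rch D v₀ v) :
    (comp D v₀).filter (fun e => v ∈ e) = D.filter (fun e => v ∈ e) := by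
  apply Finset.Subset.antisymm
  · exact Finset.filter_subset_filter _ (comp_subset D v₀)
  · intro e he
    rw [Finset.mem_filter] at he ⊢
    exact ⟨mem_comp he.1 he.2 h, he.2⟩

lemma filter_comp_of_not_rch {D : Finset (Sym2 V)} {v₀ v : V} (h : ¬ Rch D v₀ v) :
    (comp D v₀).filter (fun e => v ∈ e) = ∅ := by
  rw [Finset.filter_eq_empty_iff]
  intro e he hv
  exact h (rch_of_mem_comp he hv)

lemma filter_symmDiff (p : Sym2 V → Prop) [DecidablePred p] (M N : Finset (Sym2 V)) :
    (M ∆ N).filter p = (M.filter p) ∆ (N.filter p) := by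
  ext e; simp only [Finset.mem_filter, Finset.mem_symmDiff]; tauto

/-- Key degree computation for the swap along the component of `v₀`. -/
lemma edeg_symmDiff_comp (M N : Finset (Sym2 V)) (v₀ v : V) :
    edeg (M ∆ (comp (M ∆ N) v₀)) v = if Rch (M ∆ N) v₀ v then edeg N v else edeg M v := by
  unfold edeg
  rw [filter_symmDiff]
  by_cases h : Rch (M ∆ N) v₀ v
  · rw [if_pos h, filter_comp_of_rch h, ← filter_symmDiff, symmDiff_symmDiff_cancel_left]
  · rw [if_neg h, filter_comp_of_not_rch h]
    rw [show (∅ : Finset (Sym2 V)) = (⊥ : Finset (Sym2 V)) from rfl, symmDiff_bot]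

lemma symmDiff_symmDiff_comp (M N P : Finset (Sym2 V)) :
    (M ∆ P) ∆ (N ∆ P) = M ∆ N := by
  ext e; simp only [Finset.mem_symmDiff]; tauto

/-- reachability in `D` implies reachability in the component edge set. -/
lemma rch_comp {D : Finset (Sym2 V)} {v₀ v : V} (h : Rch D v₀ v) :
    (SimpleGraph.fromEdgeSet (↑(comp D v₀) : Set (Sym2 V))).Reachable v₀ v := by
  obtain ⟨p⟩ := h
  have aux : ∀ (u x : V) (_ : (SimpleGraph.fromEdgeSet (↑D : Set (Sym2 V))).Walk u x),
      (SimpleGraph.fromEdgeSet (↑(comp D v₀) : Set (Sym2 V))).Reachable v₀ u →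
      (SimpleGraph.fromEdgeSet (↑(comp D v₀) : Set (Sym2 V))).Reachable v₀ x := by
    intro u x p
    induction p with
    | nil => exact fun h => h
    | @cons a b c hadj q ih =>
      intro hra
      apply ih
      have hrDa : Rch D v₀ a := by
        have : SimpleGraph.fromEdgeSet (↑(comp D v₀) : Set (Sym2 V)) ≤
            SimpleGraph.fromEdgeSet (↑D : Set (Sym2 V)) :=
          SimpleGraph.fromEdgeSet_mono (by exact_mod_cast comp_subset D v₀)
        exact hra.mono this
      rw [SimpleGraph.fromEdgeSet_adj] at hadj
      have hmem : s(a, b) ∈ comp D v₀ :=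
        mem_comp (by exact_mod_cast hadj.1) (by simp) hrDa
      have : (SimpleGraph.fromEdgeSet (↑(comp D v₀) : Set (Sym2 V))).Adj a b := by
        rw [SimpleGraph.fromEdgeSet_adj]
        exact ⟨by exact_mod_cast hmem, hadj.2⟩
      exact hra.trans this.reachable
  exact aux v₀ v p (SimpleGraph.Reachable.refl _)

/-- In a graph with max degree ≤ 2, at most two vertices of the component of `v₀`
have odd degree. -/
lemma card_odd_rch_le (D : Finset (Sym2 V)) (v₀ : V) (hdiag : ∀ e ∈ D, ¬ e.IsDiag)
    (hdeg : ∀ v, edeg D v ≤ 2) :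
    (univ.filter (fun v => Rch D v₀ v ∧ edeg D v = 1)).card ≤ 2 := by
  set P := comp D v₀ with hP
  set S := univ.filter (fun v => Rch D v₀ v) with hS
  set Sv := S.filter (fun v => 1 ≤ edeg D v) with hSv
  set Odd1 := univ.filter (fun v => Rch D v₀ v ∧ edeg D v = 1) with hOdd1
  have hOdd1' : Odd1 = Sv.filter (fun v => edeg D v = 1) := by
    rw [hOdd1, hSv, hS, Finset.filter_filter, Finset.filter_filter]
    apply Finset.filter_congr
    intro v _
    constructor
    · intro h; exact ⟨h.1, le_of_eq h.2.symm, h.2⟩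
    · intro h; exact ⟨h.1, h.2.2⟩
  -- handshake on P
  have h1 : ∑ v, edeg P v = 2 * P.card :=
    sum_edeg P (fun e he => hdiag e (comp_subset D v₀ he))
  have h2 : ∑ v, edeg P v = ∑ v ∈ Sv, edeg D v := by
    rw [← Finset.sum_filter_add_sum_filter_not univ (fun v => Rch D v₀ v) (edeg P ·)]
    have hz : ∑ v ∈ univ.filter (fun v => ¬ Rch D v₀ v), edeg P v = 0 := by
      apply Finset.sum_eq_zero
      intro v hv
      rw [Finset.mem_filter] at hv
      simp [edeg, hP, filter_comp_of_not_rch hv.2]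
    rw [hz, add_zero]
    have hPD : ∀ v ∈ S, edeg P v = edeg D v := by
      intro v hv
      rw [hS, Finset.mem_filter] at hv
      simp [edeg, hP, filter_comp_of_rch hv.2]
    rw [Finset.sum_congr rfl hPD]
    rw [hSv, ← Finset.sum_filter_add_sum_filter_not S (fun v => 1 ≤ edeg D v) (edeg D ·)]
    have : ∑ v ∈ S.filter (fun v => ¬ 1 ≤ edeg D v), edeg D v = 0 := by
      apply Finset.sum_eq_zero; intro v hv; rw [Finset.mem_filter] at hv; omega
    omega
  -- on Sv, degrees are 1 or 2
  have h3 : ∑ v ∈ Sv, edeg D v = Odd1.card + 2 * (Sv.card - Odd1.card) := by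
    rw [hOdd1']
    rw [← Finset.sum_filter_add_sum_filter_not Sv (fun v => edeg D v = 1) (edeg D ·)]
    have e1 : ∑ v ∈ Sv.filter (fun v => edeg D v = 1), edeg D v
        = (Sv.filter (fun v => edeg D v = 1)).card := by
      rw [Finset.sum_congr rfl (fun v hv => (Finset.mem_filter.mp hv).2), Finset.sum_const,
        smul_eq_mul, mul_one]
    have e2 : ∑ v ∈ Sv.filter (fun v => ¬ edeg D v = 1), edeg D v
        = 2 * (Sv.filter (fun v => ¬ edeg D v = 1)).card := by
      rw [Finset.sum_congr rfl (fun v hv => ?_), Finset.sum_const, smul_eq_mul, mul_comm]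
      rw [hSv, Finset.filter_filter, Finset.mem_filter] at hv
      have := hdeg v; omega
    rw [e1, e2]
    have hc := Finset.card_filter_add_card_filter_not (s := Sv)
      (p := fun v => edeg D v = 1)
    omega
  -- connectivity bound
  have h4 : S.card ≤ P.card + 1 := by
    have hsub : S ⊆ univ.filter (fun v =>
        (SimpleGraph.fromEdgeSet (↑P : Set (Sym2 V))).Reachable v₀ v) := by
      intro v hv
      rw [hS, Finset.mem_filter] at hv
      rw [Finset.mem_filter]
      exact ⟨Finset.mem_univ _, rch_comp hv.2⟩
    exact le_trans (Finset.card_le_card hsub) (reach_card_le P v₀)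
  have h5 : Sv.card ≤ S.card := Finset.card_le_card (Finset.filter_subset _ _)
  have h6 : Odd1.card ≤ Sv.card := by
    rw [hOdd1']; exact Finset.card_le_card (Finset.filter_subset _ _)
  omega

section Swap

variable (G : SimpleGraph V) [DecidableRel G.Adj] (dangle : Fin 4 → V)

/-- dangling pattern count at a vertex -/
noncomputable def cnt (X : Finset (Fin 4)) (v : V) : ℕ :=
  (X.filter (fun i => dangle i = v)).card

lemma isPM_iff {M X} : IsPM G dangle M X ↔
    M ⊆ G.edgeFinset ∧ ∀ v : V, edeg M v + cnt dangle X v = 1 := Iff.rfl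

/-- the new dangling pattern after swapping along the component of `v₀` -/
noncomputable def zmap (R : V → Prop) (X Y : Finset (Fin 4)) : Finset (Fin 4) :=
  X.filter (fun i => ¬ R (dangle i)) ∪ Y.filter (fun i => R (dangle i))

lemma cnt_zmap (R : V → Prop) (X Y : Finset (Fin 4)) (v : V) :
    cnt dangle (zmap dangle R X Y) v =
      if R v then cnt dangle Y v else cnt dangle X v := by
  unfold cnt zmap
  by_cases h : R v
  · rw [if_pos h]
    congr 1
    ext i
    simp only [Finset.mem_filter, Finset.mem_union]
    constructor
    · rintro ⟨hm, hd⟩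
      rcases hm with ⟨hx, hr⟩ | ⟨hy, hr⟩
      · exact absurd (hd ▸ h) hr
      · exact ⟨hy, hd⟩
    · rintro ⟨hy, hd⟩
      exact ⟨Or.inr ⟨hy, hd ▸ h⟩, hd⟩
  · rw [if_neg h]
    congr 1
    ext i
    simp only [Finset.mem_filter, Finset.mem_union]
    constructor
    · rintro ⟨hm, hd⟩
      rcases hm with ⟨hx, hr⟩ | ⟨hy, hr⟩
      · exact ⟨hx, hd⟩
      · exact absurd (hd ▸ hr) h
    · rintro ⟨hx, hd⟩
      exact ⟨Or.inl ⟨hx, fun hr => h (hd ▸ hr)⟩, hd⟩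

lemma isPM_swap {M N X Y} (hM : IsPM G dangle M X) (hN : IsPM G dangle N Y)
    (v₀ : V) :
    IsPM G dangle (M ∆ comp (M ∆ N) v₀)
      (zmap dangle (Rch (M ∆ N) v₀) X Y) := by
  rw [isPM_iff]
  constructor
  · intro e he
    rw [Finset.mem_symmDiff] at he
    rcases he with ⟨heM, _⟩ | ⟨heP, _⟩
    · exact hM.1 heM
    · have := comp_subset (M ∆ N) v₀ heP
      rw [Finset.mem_symmDiff] at this
      rcases this with ⟨h1, _⟩ | ⟨h1, _⟩
      · exact hM.1 h1
      · exact hN.1 h1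
  · intro v
    rw [edeg_symmDiff_comp, cnt_zmap dangle _ X Y]
    by_cases h : Rch (M ∆ N) v₀ v
    · rw [if_pos h, if_pos h]; exact (isPM_iff G dangle).mp hN |>.2 v
    · rw [if_neg h, if_neg h]; exact (isPM_iff G dangle).mp hM |>.2 v

end Swap

section Weight
variable {V : Type} [DecidableEq V] [Fintype V]

lemma prod_symmDiff (w : Sym2 V → ℝ) (M P : Finset (Sym2 V)) :
    ∏ e ∈ M ∆ P, w e = (∏ e ∈ M \ P, w e) * (∏ e ∈ P \ M, w e) := by
  have : M ∆ P = (M \ P) ∪ (P \ M) := by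
    ext e; simp [Finset.mem_symmDiff, Finset.mem_union, Finset.mem_sdiff]
  rw [this, Finset.prod_union disjoint_sdiff_sdiff]

lemma prod_sdiff_mul (w : Sym2 V → ℝ) (M P : Finset (Sym2 V)) :
    (∏ e ∈ M \ P, w e) * (∏ e ∈ M ∩ P, w e) = ∏ e ∈ M, w e := by
  rw [← Finset.prod_union (Finset.disjoint_sdiff_inter M P), Finset.sdiff_union_inter]

/-- swapping a subset of the symmetric difference preserves the product of weights -/
lemma prod_swap (w : Sym2 V → ℝ) (M N P : Finset (Sym2 V)) (hP : P ⊆ M ∆ N) :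
    (∏ e ∈ M ∆ P, w e) * (∏ e ∈ N ∆ P, w e) = (∏ e ∈ M, w e) * (∏ e ∈ N, w e) := by
  have hMP : M ∩ P = P \ N := by
    ext e
    simp only [Finset.mem_inter, Finset.mem_sdiff]
    constructor
    · rintro ⟨h1, h2⟩
      have := hP h2; rw [Finset.mem_symmDiff] at this
      exact ⟨h2, by tauto⟩
    · rintro ⟨h1, h2⟩
      have := hP h1; rw [Finset.mem_symmDiff] at this
      exact ⟨by tauto, h1⟩
  have hNP : N ∩ P = P \ M := by
    ext e
    simp only [Finset.mem_inter, Finset.mem_sdiff]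
    constructor
    · rintro ⟨h1, h2⟩
      have := hP h2; rw [Finset.mem_symmDiff] at this
      exact ⟨h2, by tauto⟩
    · rintro ⟨h1, h2⟩
      have := hP h1; rw [Finset.mem_symmDiff] at this
      exact ⟨by tauto, h1⟩
  rw [prod_symmDiff, prod_symmDiff, ← prod_sdiff_mul w M P, ← prod_sdiff_mul w N P,
    hMP, hNP]
  ring

end Weight

section Classify
variable {V : Type} [DecidableEq V] [Fintype V]
variable (G : SimpleGraph V) [DecidableRel G.Adj] (dangle : Fin 4 → V)

lemma edeg_le_one_of_isPM {M X} (hM : IsPM G dangle M X) (v : V) : edeg M v ≤ 1 := by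
  have := hM.2 v
  unfold edeg
  omega

lemma cnt_dangle_inj (hinj : Function.Injective dangle) (X : Finset (Fin 4)) (i : Fin 4) :
    cnt dangle X (dangle i) = if i ∈ X then 1 else 0 := by
  unfold cnt
  have : X.filter (fun j => dangle j = dangle i) = X.filter (fun j => j = i) :=
    Finset.filter_congr (fun j _ => by simp [hinj.eq_iff])
  rw [this, Finset.filter_eq']
  split <;> simp

lemma edeg_dangle_of_isPM (hinj : Function.Injective dangle) {M X} (hM : IsPM G dangle M X)
    (i : Fin 4) : edeg M (dangle i) = if i ∈ X then 0 else 1 := by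
  have h1 := hM.2 (dangle i)
  have h2 := cnt_dangle_inj dangle hinj X i
  unfold cnt at h2
  unfold edeg
  rw [h2] at h1
  by_cases h : i ∈ X
  · rw [if_pos h] at h1 ⊢; omega
  · rw [if_neg h] at h1 ⊢; omega

lemma edeg_symmDiff_eq_one {M N : Finset (Sym2 V)} {v : V}
    (h : edeg M v + edeg N v = 1) : edeg (M ∆ N) v = 1 := by
  have h1 := edeg_symmDiff M N v
  have h2 := edeg_sdiff_add M N v
  have h3 := edeg_sdiff_add N M v
  have h4 : edeg (M ∩ N) v = edeg (N ∩ M) v := by rw [Finset.inter_comm]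
  omega

lemma mem_zmap (R : V → Prop) (X Y : Finset (Fin 4)) (i : Fin 4) :
    i ∈ zmap dangle R X Y ↔ (i ∈ X ∧ ¬ R (dangle i)) ∨ (i ∈ Y ∧ R (dangle i)) := by
  simp [zmap, Finset.mem_union, Finset.mem_filter]

lemma classification (hinj : Function.Injective dangle)
    {M N : Finset (Sym2 V)} (hM : IsPM G dangle M ({0,1} : Finset (Fin 4)))
    (hN : IsPM G dangle N ({2,3} : Finset (Fin 4))) :
    (Odd (zmap dangle (Rch (M ∆ N) (dangle 0)) ({0,1} : Finset (Fin 4)) {2,3}).card) ∨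
    (zmap dangle (Rch (M ∆ N) (dangle 0)) ({0,1} : Finset (Fin 4)) {2,3} = ∅ ∧
      zmap dangle (Rch (M ∆ N) (dangle 0)) ({2,3} : Finset (Fin 4)) {0,1} = Finset.univ) ∨
    (zmap dangle (Rch (M ∆ N) (dangle 0)) ({0,1} : Finset (Fin 4)) {2,3} = {1,2} ∧
      zmap dangle (Rch (M ∆ N) (dangle 0)) ({2,3} : Finset (Fin 4)) {0,1} = {0,3}) ∨
    (zmap dangle (Rch (M ∆ N) (dangle 0)) ({0,1} : Finset (Fin 4)) {2,3} = {1,3} ∧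
      zmap dangle (Rch (M ∆ N) (dangle 0)) ({2,3} : Finset (Fin 4)) {0,1} = {0,2}) := by
  set D := M ∆ N with hD
  set R := Rch D (dangle 0) with hR
  have hr0 : R (dangle 0) := rch_refl D (dangle 0)
  have hE : ∀ i : Fin 4, edeg D (dangle i) = 1 := by
    intro i
    apply edeg_symmDiff_eq_one
    rw [edeg_dangle_of_isPM G dangle hinj hM i, edeg_dangle_of_isPM G dangle hinj hN i]
    fin_cases i <;> decide
  have hdiag : ∀ e ∈ D, ¬ e.IsDiag := by
    intro e he
    rw [hD, Finset.mem_symmDiff] at he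
    have heE : e ∈ G.edgeFinset := by
      rcases he with ⟨h1, _⟩ | ⟨h1, _⟩
      exacts [hM.1 h1, hN.1 h1]
    rw [SimpleGraph.mem_edgeFinset] at heE
    exact G.not_isDiag_of_mem_edgeSet heE
  have hdeg : ∀ v, edeg D v ≤ 2 := by
    intro v
    have h1 := edeg_symmDiff M N v
    rw [← hD] at h1
    have h2 := edeg_mono (Finset.sdiff_subset : M \ N ⊆ M) v
    have h3 := edeg_mono (Finset.sdiff_subset : N \ M ⊆ N) v
    have h4 := edeg_le_one_of_isPM G dangle hM v
    have h5 := edeg_le_one_of_isPM G dangle hN v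
    omega
  have hRall : ¬ (R (dangle 1) ∧ R (dangle 2) ∧ R (dangle 3)) := by
    rintro ⟨h1, h2, h3⟩
    have hRi : ∀ i : Fin 4, R (dangle i) := by
      intro i; fin_cases i <;> assumption
    have hsub : (Finset.univ : Finset (Fin 4)).image dangle ⊆
        Finset.univ.filter (fun v => Rch D (dangle 0) v ∧ edeg D v = 1) := by
      intro v hv
      rw [Finset.mem_image] at hv
      obtain ⟨i, _, rfl⟩ := hv
      rw [Finset.mem_filter]
      exact ⟨Finset.mem_univ _, hRi i, hE i⟩
    have hcard := Finset.card_le_card hsub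
    rw [Finset.card_image_of_injective _ hinj] at hcard
    have hle := card_odd_rch_le D (dangle 0) hdiag hdeg
    simp at hcard
    omega
  by_cases r1 : R (dangle 1) <;> by_cases r2 : R (dangle 2) <;> by_cases r3 : R (dangle 3)
  · exact absurd ⟨r1, r2, r3⟩ hRall
  · refine Or.inl ?_
    have hZ : zmap dangle R ({0,1} : Finset (Fin 4)) {2,3} = {2} := by
      ext i; fin_cases i <;> simp [mem_zmap, hr0, r1, r2, r3]
    rw [hZ]; decide
  · refine Or.inl ?_
    have hZ : zmap dangle R ({0,1} : Finset (Fin 4)) {2,3} = {3} := by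
      ext i; fin_cases i <;> simp [mem_zmap, hr0, r1, r2, r3]
    rw [hZ]; decide
  · refine Or.inr (Or.inl ⟨?_, ?_⟩)
    · ext i; fin_cases i <;> simp [mem_zmap, hr0, r1, r2, r3]
    · ext i; fin_cases i <;> simp [mem_zmap, hr0, r1, r2, r3]
  · refine Or.inl ?_
    have hZ : zmap dangle R ({0,1} : Finset (Fin 4)) {2,3} = {1,2,3} := by
      ext i; fin_cases i <;> simp [mem_zmap, hr0, r1, r2, r3]
    rw [hZ]; decide
  · refine Or.inr (Or.inr (Or.inl ⟨?_, ?_⟩))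
    · ext i; fin_cases i <;> simp [mem_zmap, hr0, r1, r2, r3]
    · ext i; fin_cases i <;> simp [mem_zmap, hr0, r1, r2, r3]
  · refine Or.inr (Or.inr (Or.inr ⟨?_, ?_⟩))
    · ext i; fin_cases i <;> simp [mem_zmap, hr0, r1, r2, r3]
    · ext i; fin_cases i <;> simp [mem_zmap, hr0, r1, r2, r3]
  · refine Or.inl ?_
    have hZ : zmap dangle R ({0,1} : Finset (Fin 4)) {2,3} = {1} := by
      ext i; fin_cases i <;> simp [mem_zmap, hr0, r1, r2, r3]
    rw [hZ]; decide

end Classify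
section Core
variable (G : SimpleGraph V) [DecidableRel G.Adj] (w : Sym2 V → ℝ) (dangle : Fin 4 → V)

lemma matchgateSig_eq_sum_filter (X : Finset (Fin 4)) :
    matchgateSig G w dangle X
      = ∑ M ∈ univ.filter (fun M => IsPM G dangle M X), ∏ e ∈ M, w e := by
  rw [matchgateSig]
  exact (Finset.sum_filter _ _).symm

lemma prod_w_nonneg (hw : ∀ e, 0 ≤ w e) (M : Finset (Sym2 V)) : 0 ≤ ∏ e ∈ M, w e :=
  Finset.prod_nonneg (fun e _ => hw e)

lemma prod_eq_zero_of_sig_zero (hw : ∀ e, 0 ≤ w e) {M : Finset (Sym2 V)} {X : Finset (Fin 4)}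
    (hM : IsPM G dangle M X) (h0 : matchgateSig G w dangle X = 0) :
    ∏ e ∈ M, w e = 0 := by
  rw [matchgateSig] at h0
  have hterm := (Finset.sum_eq_zero_iff_of_nonneg (fun N _ => ?_)).mp h0 M (Finset.mem_univ M)
  · rwa [if_pos hM] at hterm
  · split
    · exact prod_w_nonneg w hw _
    · exact le_refl 0

/-- the weight of a pair of matchings -/
noncomputable def wt (p : Finset (Sym2 V) × Finset (Sym2 V)) : ℝ :=
  (∏ e ∈ p.1, w e) * (∏ e ∈ p.2, w e)

lemma wt_nonneg (hw : ∀ e, 0 ≤ w e) (p : Finset (Sym2 V) × Finset (Sym2 V)) : 0 ≤ wt w p :=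
  mul_nonneg (prod_w_nonneg w hw _) (prod_w_nonneg w hw _)

lemma sig_mul_sig (X Y : Finset (Fin 4)) :
    matchgateSig G w dangle X * matchgateSig G w dangle Y
      = ∑ p ∈ (univ.filter (fun M => IsPM G dangle M X)) ×ˢ
          (univ.filter (fun M => IsPM G dangle M Y)), wt w p := by
  rw [matchgateSig_eq_sum_filter, matchgateSig_eq_sum_filter, Finset.sum_mul_sum]
  rw [Finset.sum_product]
  rfl

/-- the swap map on pairs of edge sets -/
noncomputable def Phi (v₀ : V) (p : Finset (Sym2 V) × Finset (Sym2 V)) :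
    Finset (Sym2 V) × Finset (Sym2 V) :=
  (p.1 ∆ comp (p.1 ∆ p.2) v₀, p.2 ∆ comp (p.1 ∆ p.2) v₀)

lemma Phi_invol (v₀ : V) : Function.Involutive (Phi (V := V) v₀) := by
  intro p
  unfold Phi
  simp only [symmDiff_symmDiff_comp, symmDiff_symmDiff_cancel_right]

lemma wt_Phi (v₀ : V) (p : Finset (Sym2 V) × Finset (Sym2 V)) :
    wt w (Phi v₀ p) = wt w p := by
  unfold Phi wt
  exact prod_swap w p.1 p.2 _ (comp_subset _ _)

theorem core (hw : ∀ e, 0 ≤ w e) (hinj : Function.Injective dangle)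
    (heven : ∀ X : Finset (Fin 4), ¬ Even X.card → matchgateSig G w dangle X = 0) :
    matchgateSig G w dangle {0, 1} * matchgateSig G w dangle {2, 3} ≤
      matchgateSig G w dangle {1, 2} * matchgateSig G w dangle {0, 3} +
      matchgateSig G w dangle {1, 3} * matchgateSig G w dangle {0, 2} +
      matchgateSig G w dangle ∅ * matchgateSig G w dangle Finset.univ := by
  classical
  set d0 := dangle 0 with hd0
  set PM : Finset (Fin 4) → Finset (Finset (Sym2 V)) :=
    fun X => univ.filter (fun M => IsPM G dangle M X) with hPM
  set T : Finset (Finset (Sym2 V) × Finset (Sym2 V)) :=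
    PM {0,1} ×ˢ PM {2,3} with hT
  set z : Finset (Sym2 V) × Finset (Sym2 V) → Finset (Fin 4) :=
    fun p => zmap dangle (Rch (p.1 ∆ p.2) d0) {0,1} {2,3} with hz
  set z' : Finset (Sym2 V) × Finset (Sym2 V) → Finset (Fin 4) :=
    fun p => zmap dangle (Rch (p.1 ∆ p.2) d0) {2,3} {0,1} with hz'
  have hmemT : ∀ p ∈ T, IsPM G dangle p.1 ({0,1} : Finset (Fin 4)) ∧
      IsPM G dangle p.2 ({2,3} : Finset (Fin 4)) := by
    intro p hp
    rw [hT, Finset.mem_product, hPM, Finset.mem_filter, Finset.mem_filter] at hp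
    exact ⟨hp.1.2, hp.2.2⟩
  have hPhi1 : ∀ p ∈ T, IsPM G dangle (Phi d0 p).1 (z p) := by
    intro p hp
    exact isPM_swap G dangle (hmemT p hp).1 (hmemT p hp).2 d0
  have hPhi2 : ∀ p ∈ T, IsPM G dangle (Phi d0 p).2 (z' p) := by
    intro p hp
    have h := isPM_swap G dangle (hmemT p hp).2 (hmemT p hp).1 d0
    rw [symmDiff_comm p.2 p.1] at h
    exact h
  -- generic bound for one of the three classes
  have bound : ∀ W W' : Finset (Fin 4),
      (∑ p ∈ T.filter (fun p => z p = W ∧ z' p = W'), wt w p)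
        ≤ matchgateSig G w dangle W * matchgateSig G w dangle W' := by
    intro W W'
    rw [sig_mul_sig]
    have hinj' : ∀ x ∈ T.filter (fun p => z p = W ∧ z' p = W'),
        ∀ y ∈ T.filter (fun p => z p = W ∧ z' p = W'), Phi d0 x = Phi d0 y → x = y :=
      fun x _ y _ h => (Phi_invol d0).injective h
    calc (∑ p ∈ T.filter (fun p => z p = W ∧ z' p = W'), wt w p)
        = ∑ p ∈ T.filter (fun p => z p = W ∧ z' p = W'), wt w (Phi d0 p) := by
          exact Finset.sum_congr rfl (fun p _ => (wt_Phi w d0 p).symm)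
      _ = ∑ q ∈ (T.filter (fun p => z p = W ∧ z' p = W')).image (Phi d0), wt w q :=
          (Finset.sum_image hinj').symm
      _ ≤ ∑ p ∈ (univ.filter (fun M => IsPM G dangle M W)) ×ˢ
            (univ.filter (fun M => IsPM G dangle M W')), wt w p := by
          apply Finset.sum_le_sum_of_subset_of_nonneg
          · intro q hq
            rw [Finset.mem_image] at hq
            obtain ⟨p, hp, rfl⟩ := hq
            rw [Finset.mem_filter] at hp
            rw [Finset.mem_product, Finset.mem_filter, Finset.mem_filter]
            refine ⟨⟨Finset.mem_univ _, ?_⟩, ⟨Finset.mem_univ _, ?_⟩⟩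
            · rw [← hp.2.1]; exact hPhi1 p hp.1
            · rw [← hp.2.2]; exact hPhi2 p hp.1
          · intro p _ _
            exact wt_nonneg w hw p
  -- splitting the left-hand side
  set qa : Finset (Sym2 V) × Finset (Sym2 V) → Prop :=
    fun p => z p = ({1,2} : Finset (Fin 4)) ∧ z' p = ({0,3} : Finset (Fin 4)) with hqa
  set qb : Finset (Sym2 V) × Finset (Sym2 V) → Prop :=
    fun p => z p = ({1,3} : Finset (Fin 4)) ∧ z' p = ({0,2} : Finset (Fin 4)) with hqb
  set qc : Finset (Sym2 V) × Finset (Sym2 V) → Prop :=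
    fun p => z p = (∅ : Finset (Fin 4)) ∧ z' p = (Finset.univ : Finset (Fin 4)) with hqc
  have hsplit1 := (Finset.sum_filter_add_sum_filter_not T qa (wt w)).symm
  have hsplit2 := (Finset.sum_filter_add_sum_filter_not (T.filter (fun p => ¬ qa p)) qb
    (wt w)).symm
  have hsplit3 := (Finset.sum_filter_add_sum_filter_not
    ((T.filter (fun p => ¬ qa p)).filter (fun p => ¬ qb p)) qc (wt w)).symm
  have hrest : ∑ p ∈ (((T.filter (fun p => ¬ qa p)).filter (fun p => ¬ qb p)).filter
      (fun p => ¬ qc p)), wt w p = 0 := by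
    apply Finset.sum_eq_zero
    intro p hp
    rw [Finset.mem_filter, Finset.mem_filter, Finset.mem_filter] at hp
    obtain ⟨⟨⟨hpT, hna⟩, hnb⟩, hnc⟩ := hp
    have hcl := classification G dangle hinj (hmemT p hpT).1 (hmemT p hpT).2
    have hodd : Odd (z p).card := by
      rcases hcl with h | h | h | h
      · exact h
      · exact absurd h hnc
      · exact absurd h hna
      · exact absurd h hnb
    have h0 : matchgateSig G w dangle (z p) = 0 :=
      heven (z p) (Nat.not_even_iff_odd.mpr hodd)
    have h1 : ∏ e ∈ (Phi d0 p).1, w e = 0 :=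
      prod_eq_zero_of_sig_zero G w dangle hw (hPhi1 p hpT) h0
    rw [← wt_Phi w d0 p]
    unfold wt
    rw [h1, zero_mul]
  have hmono_b : ∑ p ∈ (T.filter (fun p => ¬ qa p)).filter qb, wt w p
      ≤ ∑ p ∈ T.filter qb, wt w p := by
    apply Finset.sum_le_sum_of_subset_of_nonneg
    · intro p hp
      rw [Finset.mem_filter] at hp ⊢
      rw [Finset.mem_filter] at hp
      exact ⟨hp.1.1, hp.2⟩
    · intro p _ _; exact wt_nonneg w hw p
  have hmono_c : ∑ p ∈ ((T.filter (fun p => ¬ qa p)).filter (fun p => ¬ qb p)).filter qc, wt w p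
      ≤ ∑ p ∈ T.filter qc, wt w p := by
    apply Finset.sum_le_sum_of_subset_of_nonneg
    · intro p hp
      rw [Finset.mem_filter] at hp ⊢
      rw [Finset.mem_filter] at hp
      rw [Finset.mem_filter] at hp
      exact ⟨hp.1.1.1, hp.2⟩
    · intro p _ _; exact wt_nonneg w hw p
  have hLHS : matchgateSig G w dangle {0, 1} * matchgateSig G w dangle {2, 3}
      = ∑ p ∈ T, wt w p := by
    rw [sig_mul_sig]
  have ha := bound ({1,2} : Finset (Fin 4)) ({0,3} : Finset (Fin 4))
  have hb := bound ({1,3} : Finset (Fin 4)) ({0,2} : Finset (Fin 4))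
  have hc := bound (∅ : Finset (Fin 4)) (Finset.univ : Finset (Fin 4))
  rw [hLHS]
  rw [hsplit1, hsplit2, hsplit3, hrest]
  have hbb : ∑ p ∈ T.filter qb, wt w p ≤
      matchgateSig G w dangle {1, 3} * matchgateSig G w dangle {0, 2} := hb
  have hcc : ∑ p ∈ T.filter qc, wt w p ≤
      matchgateSig G w dangle ∅ * matchgateSig G w dangle Finset.univ := hc
  have haa : ∑ p ∈ T.filter qa, wt w p ≤
      matchgateSig G w dangle {1, 2} * matchgateSig G w dangle {0, 3} := ha
  linarith [hmono_b, hmono_c]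

end Core
section Ext

variable (G : SimpleGraph V) [DecidableRel G.Adj] (dangle : Fin 4 → V)

abbrev VExt (V : Type) : Type := V ⊕ (Fin 4 × Bool)

/-- new dangling vertices -/
def dangleExt : Fin 4 → VExt V := fun i => Sum.inr (i, true)

def gB (i : Fin 4) : Sym2 (VExt V) := s(Sum.inl (dangle i), Sum.inr (i, false))
def gC (i : Fin 4) : Sym2 (VExt V) := s((Sum.inr (i, false) : VExt V), Sum.inr (i, true))

/-- the edge set of the extended matchgate -/
def extE : Set (Sym2 (VExt V)) :=
  {e | (∃ e₀ ∈ G.edgeSet, Sym2.map Sum.inl e₀ = e) ∨ (∃ i, gB dangle i = e) ∨ (∃ i, gC i = e)}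

noncomputable def GExt : SimpleGraph (VExt V) := SimpleGraph.fromEdgeSet (extE G dangle)

noncomputable instance : DecidableRel (GExt G dangle).Adj := Classical.decRel _

noncomputable def wExt (w : Sym2 V → ℝ) : Sym2 (VExt V) → ℝ :=
  Sym2.lift ⟨fun a b => match a, b with
    | Sum.inl x, Sum.inl y => w s(x, y)
    | Sum.inl _, Sum.inr _ => 1
    | Sum.inr _, Sum.inl _ => 1
    | Sum.inr _, Sum.inr _ => 1, by
      intro a b
      cases a with
      | inl x => cases b with
        | inl y => exact congrArg w (Sym2.eq_swap)
        | inr y => rfl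
      | inr x => cases b <;> rfl⟩

lemma wExt_map (w : Sym2 V → ℝ) (e : Sym2 V) : wExt w (Sym2.map Sum.inl e) = w e := by
  induction e with
  | _ x y => rw [Sym2.map_pair_eq]; rfl

lemma wExt_gB (w : Sym2 V → ℝ) (i : Fin 4) : wExt w (gB dangle i) = 1 := rfl
lemma wExt_gC (w : Sym2 V → ℝ) (i : Fin 4) : wExt w (gC (V := V) i) = 1 := rfl

lemma wExt_nonneg (w : Sym2 V → ℝ) (hw : ∀ e, 0 ≤ w e) (e : Sym2 (VExt V)) :
    0 ≤ wExt w e := by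
  induction e with
  | _ a b =>
    cases a with
    | inl x => cases b with
      | inl y => exact hw _
      | inr y => exact zero_le_one
    | inr x => cases b with
      | inl y => exact zero_le_one
      | inr y => exact zero_le_one

lemma gB_injective : Function.Injective (gB dangle) := by
  intro i j h
  rw [gB, gB, Sym2.eq_iff] at h
  rcases h with ⟨_, h2⟩ | ⟨h1, _⟩
  · exact congrArg Prod.fst (Sum.inr_injective h2)
  · exact absurd h1 (by simp)

lemma gC_injective : Function.Injective (gC (V := V)) := by
  intro i j h
  rw [gC, gC, Sym2.eq_iff] at h
  rcases h with ⟨h1, _⟩ | ⟨h1, _⟩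
  · exact congrArg Prod.fst (Sum.inr_injective h1)
  · exact congrArg Prod.fst (Sum.inr_injective h1)

variable (X : Finset (Fin 4))

noncomputable def phiM (M : Finset (Sym2 V)) : Finset (Sym2 (VExt V)) :=
  M.image (Sym2.map Sum.inl) ∪ X.image (gB dangle) ∪ Xᶜ.image (gC (V := V))

lemma mem_map_inl_iff (e : Sym2 V) (x : V) :
    (Sum.inl x : VExt V) ∈ Sym2.map Sum.inl e ↔ x ∈ e := by
  simp [Sym2.mem_map]

lemma inr_not_mem_map (y : Fin 4 × Bool) (e : Sym2 V) :
    (Sum.inr y : VExt V) ∉ Sym2.map Sum.inl e := by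
  simp [Sym2.mem_map]

lemma disjAB (M : Finset (Sym2 V)) :
    Disjoint (M.image (Sym2.map Sum.inl)) (X.image (gB dangle)) := by
  rw [Finset.disjoint_left]
  rintro e he1 he2
  rw [Finset.mem_image] at he1 he2
  obtain ⟨e₀, _, rfl⟩ := he1
  obtain ⟨i, _, heq⟩ := he2
  exact inr_not_mem_map (i, false) e₀ (heq ▸ (by simp [gB] : Sum.inr (i, false) ∈ gB dangle i))

lemma disjAC (M : Finset (Sym2 V)) :
    Disjoint (M.image (Sym2.map Sum.inl)) (Xᶜ.image (gC (V := V))) := by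
  rw [Finset.disjoint_left]
  rintro e he1 he2
  rw [Finset.mem_image] at he1 he2
  obtain ⟨e₀, _, rfl⟩ := he1
  obtain ⟨i, _, heq⟩ := he2
  exact inr_not_mem_map (i, false) e₀ (heq ▸ (by simp [gC] : (Sum.inr (i, false) : VExt V) ∈ gC i))

lemma disjBC : Disjoint (X.image (gB dangle)) (Xᶜ.image (gC (V := V))) := by
  rw [Finset.disjoint_left]
  rintro e he1 he2
  rw [Finset.mem_image] at he1 he2
  obtain ⟨i, _, rfl⟩ := he1
  obtain ⟨j, _, heq⟩ := he2
  rw [gC, gB, Sym2.eq_iff] at heq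
  rcases heq with ⟨h1, -⟩ | ⟨-, h2⟩
  · exact absurd h1 (by simp)
  · exact absurd h2 (by simp)

lemma edeg_image_gen (g : Fin 4 → Sym2 (VExt V)) (hg : Function.Injective g)
    (S : Finset (Fin 4)) (v : VExt V) :
    edeg (S.image g) v = (S.filter (fun i => v ∈ g i)).card := by
  unfold edeg
  rw [Finset.filter_image, Finset.card_image_of_injective _ hg]

lemma edeg_A_inl (M : Finset (Sym2 V)) (x : V) :
    edeg (M.image (Sym2.map Sum.inl)) (Sum.inl x : VExt V) = edeg M x := by
  unfold edeg
  rw [Finset.filter_image, Finset.card_image_of_injective _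
    (Sym2.map.injective Sum.inl_injective)]
  congr 1
  apply Finset.filter_congr
  intro e _
  simp [Sym2.mem_map]

lemma edeg_A_inr (M : Finset (Sym2 V)) (y : Fin 4 × Bool) :
    edeg (M.image (Sym2.map Sum.inl)) (Sum.inr y : VExt V) = 0 := by
  unfold edeg
  rw [Finset.card_eq_zero, Finset.filter_eq_empty_iff]
  intro e he
  rw [Finset.mem_image] at he
  obtain ⟨e₀, _, rfl⟩ := he
  exact inr_not_mem_map y e₀

lemma edeg_phiM (M : Finset (Sym2 V)) (v : VExt V) :
    edeg (phiM dangle X M) v = edeg (M.image (Sym2.map Sum.inl)) v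
      + ((X.filter (fun i => v ∈ gB dangle i)).card
        + (Xᶜ.filter (fun i => v ∈ gC (V := V) i)).card) := by
  rw [phiM, Finset.union_assoc,
    edeg_union_of_disjoint (Finset.disjoint_union_right.mpr ⟨disjAB dangle X M, disjAC X M⟩),
    edeg_union_of_disjoint (disjBC dangle X),
    edeg_image_gen (gB dangle) (gB_injective dangle) X,
    edeg_image_gen (gC (V := V)) (gC_injective) Xᶜ]

lemma edeg_phiM_inl (M : Finset (Sym2 V)) (x : V) :
    edeg (phiM dangle X M) (Sum.inl x) = edeg M x + (X.filter (fun i => dangle i = x)).card := by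
  rw [edeg_phiM, edeg_A_inl]
  have h1 : X.filter (fun i => (Sum.inl x : VExt V) ∈ gB dangle i)
      = X.filter (fun i => dangle i = x) := by
    apply Finset.filter_congr
    intro i _
    simp [gB, Sym2.mem_iff, eq_comm]
  have h2 : Xᶜ.filter (fun i => (Sum.inl x : VExt V) ∈ gC (V := V) i) = ∅ := by
    rw [Finset.filter_eq_empty_iff]
    intro i _
    simp [gC, Sym2.mem_iff]
  rw [h1, h2]
  simp

lemma edeg_phiM_af (M : Finset (Sym2 V)) (i : Fin 4) :
    edeg (phiM dangle X M) (Sum.inr (i, false)) = 1 := by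
  rw [edeg_phiM, edeg_A_inr]
  have h1 : X.filter (fun j => (Sum.inr (i, false) : VExt V) ∈ gB dangle j)
      = X.filter (fun j => j = i) := by
    apply Finset.filter_congr
    intro j _
    simp [gB, Sym2.mem_iff, Prod.ext_iff, eq_comm]
  have h2 : Xᶜ.filter (fun j => (Sum.inr (i, false) : VExt V) ∈ gC (V := V) j)
      = Xᶜ.filter (fun j => j = i) := by
    apply Finset.filter_congr
    intro j _
    simp [gC, Sym2.mem_iff, Prod.ext_iff, eq_comm]
  rw [h1, h2, Finset.filter_eq', Finset.filter_eq']
  by_cases h : i ∈ X <;> simp [h]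

lemma edeg_phiM_ut (M : Finset (Sym2 V)) (i : Fin 4) :
    edeg (phiM dangle X M) (Sum.inr (i, true)) = if i ∈ X then 0 else 1 := by
  rw [edeg_phiM, edeg_A_inr]
  have h1 : X.filter (fun j => (Sum.inr (i, true) : VExt V) ∈ gB dangle j) = ∅ := by
    rw [Finset.filter_eq_empty_iff]
    intro j _
    simp [gB, Sym2.mem_iff, Prod.ext_iff]
  have h2 : Xᶜ.filter (fun j => (Sum.inr (i, true) : VExt V) ∈ gC (V := V) j)
      = Xᶜ.filter (fun j => j = i) := by
    apply Finset.filter_congr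
    intro j _
    simp [gC, Sym2.mem_iff, Prod.ext_iff, eq_comm]
  rw [h1, h2, Finset.filter_eq']
  by_cases h : i ∈ X <;> simp [h]

lemma cntExt_inl (x : V) :
    (X.filter (fun i => dangleExt (V := V) i = Sum.inl x)).card = 0 := by
  rw [Finset.card_eq_zero, Finset.filter_eq_empty_iff]
  intro i _
  simp [dangleExt]

lemma cntExt_af (i : Fin 4) :
    (X.filter (fun j => dangleExt (V := V) j = Sum.inr (i, false))).card = 0 := by
  rw [Finset.card_eq_zero, Finset.filter_eq_empty_iff]
  intro j _
  simp [dangleExt]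

lemma cntExt_ut (i : Fin 4) :
    (X.filter (fun j => dangleExt (V := V) j = Sum.inr (i, true))).card
      = if i ∈ X then 1 else 0 := by
  have : X.filter (fun j => dangleExt (V := V) j = Sum.inr (i, true))
      = X.filter (fun j => j = i) := by
    apply Finset.filter_congr
    intro j _
    simp [dangleExt, Prod.ext_iff]
  rw [this, Finset.filter_eq']
  by_cases h : i ∈ X <;> simp [h]

noncomputable def psiM (M' : Finset (Sym2 (VExt V))) : Finset (Sym2 V) :=
  Finset.univ.filter (fun e => Sym2.map Sum.inl e ∈ M')

lemma mem_extE_of_mem {M' : Finset (Sym2 (VExt V))}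
    (hM' : M' ⊆ (GExt G dangle).edgeFinset) {e : Sym2 (VExt V)} (he : e ∈ M') :
    e ∈ extE G dangle := by
  have := hM' he
  rw [SimpleGraph.mem_edgeFinset, GExt, SimpleGraph.edgeSet_fromEdgeSet, Set.mem_diff] at this
  exact this.1

lemma isPM_phiM {M : Finset (Sym2 V)} (hM : IsPM G dangle M X) :
    IsPM (GExt G dangle) (dangleExt (V := V)) (phiM dangle X M) X := by
  constructor
  · intro e he
    rw [SimpleGraph.mem_edgeFinset, GExt, SimpleGraph.edgeSet_fromEdgeSet, Set.mem_diff]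
    rw [phiM, Finset.mem_union, Finset.mem_union] at he
    constructor
    · rcases he with (he | he) | he <;> rw [Finset.mem_image] at he <;>
        obtain ⟨a, ha, rfl⟩ := he
      · exact Or.inl ⟨a, (SimpleGraph.mem_edgeFinset).mp (hM.1 ha), rfl⟩
      · exact Or.inr (Or.inl ⟨a, rfl⟩)
      · exact Or.inr (Or.inr ⟨a, rfl⟩)
    · rcases he with (he | he) | he <;> rw [Finset.mem_image] at he <;>
        obtain ⟨a, ha, rfl⟩ := he
      · intro hd
        rw [Sym2.mem_diagSet, Sym2.isDiag_map Sum.inl_injective] at hd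
        exact G.not_isDiag_of_mem_edgeSet ((SimpleGraph.mem_edgeFinset).mp (hM.1 ha)) hd
      · rw [Sym2.mem_diagSet, gB, Sym2.mk_isDiag_iff]
        simp
      · rw [Sym2.mem_diagSet, gC, Sym2.mk_isDiag_iff]
        simp
  · intro v
    show edeg (phiM dangle X M) v + (X.filter (fun i => dangleExt (V := V) i = v)).card = 1
    cases v with
    | inl x =>
      rw [edeg_phiM_inl, cntExt_inl]
      have := hM.2 x
      unfold edeg
      omega
    | inr y =>
      obtain ⟨i, b⟩ := y
      cases b
      · rw [edeg_phiM_af, cntExt_af]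
      · rw [edeg_phiM_ut, cntExt_ut]
        by_cases h : i ∈ X <;> simp [h]

lemma psiM_phiM (M : Finset (Sym2 V)) : psiM (phiM dangle X M) = M := by
  ext e
  rw [psiM, Finset.mem_filter]
  simp only [Finset.mem_univ, true_and]
  constructor
  · intro h
    rw [phiM, Finset.mem_union, Finset.mem_union] at h
    rcases h with (h | h) | h <;> rw [Finset.mem_image] at h <;> obtain ⟨a, ha, heq⟩ := h
    · rwa [← Sym2.map.injective Sum.inl_injective heq]
    · exact absurd (heq ▸ (by simp [gB] : Sum.inr (a, false) ∈ gB dangle a))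
        (inr_not_mem_map _ _)
    · exact absurd (heq ▸ (by simp [gC] : (Sum.inr (a, false) : VExt V) ∈ gC a))
        (inr_not_mem_map _ _)
  · intro h
    rw [phiM, Finset.mem_union, Finset.mem_union]
    exact Or.inl (Or.inl (Finset.mem_image_of_mem _ h))

lemma edeg_one_exists {M' : Finset (Sym2 (VExt V))} {v : VExt V}
    (h : edeg M' v = 1) : ∃ e ∈ M', v ∈ e := by
  have : (M'.filter (fun e => v ∈ e)).Nonempty := by
    rw [← Finset.card_pos, show (M'.filter (fun e => v ∈ e)).card = edeg M' v from rfl, h]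
    omega
  obtain ⟨e, he⟩ := this
  rw [Finset.mem_filter] at he
  exact ⟨e, he.1, he.2⟩

lemma structure_M' {M' : Finset (Sym2 (VExt V))}
    (hM' : IsPM (GExt G dangle) (dangleExt (V := V)) M' X) :
    (∀ i ∈ X, gC (V := V) i ∉ M' ∧ gB dangle i ∈ M') ∧
    (∀ i ∉ X, gC (V := V) i ∈ M' ∧ gB dangle i ∉ M') := by
  have hdeg : ∀ v : VExt V,
      edeg M' v + (X.filter (fun i => dangleExt (V := V) i = v)).card = 1 := hM'.2
  have hC_not : ∀ i ∈ X, gC (V := V) i ∉ M' := by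
    intro i hi hmem
    have h1 := hdeg (Sum.inr (i, true))
    rw [cntExt_ut, if_pos hi] at h1
    have h2 : edeg M' (Sum.inr (i, true)) = 0 := by omega
    rw [show edeg M' (Sum.inr (i, true)) = (M'.filter
      (fun e => (Sum.inr (i, true) : VExt V) ∈ e)).card from rfl, Finset.card_eq_zero,
      Finset.filter_eq_empty_iff] at h2
    exact h2 hmem (by simp [gC])
  have hB_mem : ∀ i ∈ X, gB dangle i ∈ M' := by
    intro i hi
    have h1 := hdeg (Sum.inr (i, false))
    rw [cntExt_af] at h1
    obtain ⟨e, heM, hev⟩ := edeg_one_exists (by omega : edeg M' (Sum.inr (i, false)) = 1)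
    have heE := mem_extE_of_mem G dangle hM'.1 heM
    rcases heE with ⟨e₀, _, rfl⟩ | ⟨j, rfl⟩ | ⟨j, rfl⟩
    · exact absurd hev (inr_not_mem_map _ _)
    · have : j = i := by
        rw [gB, Sym2.mem_iff] at hev
        rcases hev with h | h
        · exact absurd h (by simp)
        · exact congrArg Prod.fst (Sum.inr_injective h.symm)
      rwa [this] at heM
    · have : j = i := by
        rw [gC, Sym2.mem_iff] at hev
        rcases hev with h | h
        · exact congrArg Prod.fst (Sum.inr_injective h.symm)
        · exact absurd h (by simp)
      rw [this] at heM
      exact absurd heM (hC_not i hi)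
  have hC_mem : ∀ i ∉ X, gC (V := V) i ∈ M' := by
    intro i hi
    have h1 := hdeg (Sum.inr (i, true))
    rw [cntExt_ut, if_neg hi] at h1
    obtain ⟨e, heM, hev⟩ := edeg_one_exists (by omega : edeg M' (Sum.inr (i, true)) = 1)
    have heE := mem_extE_of_mem G dangle hM'.1 heM
    rcases heE with ⟨e₀, _, rfl⟩ | ⟨j, rfl⟩ | ⟨j, rfl⟩
    · exact absurd hev (inr_not_mem_map _ _)
    · exfalso
      rw [gB, Sym2.mem_iff] at hev
      rcases hev with h | h
      · exact absurd h (by simp)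
      · have := Sum.inr_injective h
        simp [Prod.ext_iff] at this
    · have : j = i := by
        rw [gC, Sym2.mem_iff] at hev
        rcases hev with h | h
        · have := Sum.inr_injective h
          simp [Prod.ext_iff] at this
        · exact congrArg Prod.fst (Sum.inr_injective h.symm)
      rwa [this] at heM
  have hB_not : ∀ i ∉ X, gB dangle i ∉ M' := by
    intro i hi hmem
    have h1 := hdeg (Sum.inr (i, false))
    rw [cntExt_af] at h1
    have hpair : ({gB dangle i, gC (V := V) i} : Finset (Sym2 (VExt V)))
        ⊆ M'.filter (fun e => (Sum.inr (i, false) : VExt V) ∈ e) := by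
      intro e he
      rw [Finset.mem_insert, Finset.mem_singleton] at he
      rw [Finset.mem_filter]
      rcases he with rfl | rfl
      · exact ⟨hmem, by simp [gB]⟩
      · exact ⟨hC_mem i hi, by simp [gC]⟩
    have hcard := Finset.card_le_card hpair
    rw [Finset.card_pair (by simp [gB, gC, Sym2.eq_iff])] at hcard
    have : edeg M' (Sum.inr (i, false)) ≥ 2 := hcard
    omega
  exact ⟨fun i hi => ⟨hC_not i hi, hB_mem i hi⟩, fun i hi => ⟨hC_mem i hi, hB_not i hi⟩⟩

lemma phiM_psiM {M' : Finset (Sym2 (VExt V))}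
    (hM' : IsPM (GExt G dangle) (dangleExt (V := V)) M' X) :
    phiM dangle X (psiM M') = M' := by
  obtain ⟨hX, hXc⟩ := structure_M' G dangle X hM'
  ext e
  rw [phiM, Finset.mem_union, Finset.mem_union]
  constructor
  · rintro ((h | h) | h) <;> rw [Finset.mem_image] at h <;> obtain ⟨a, ha, rfl⟩ := h
    · rw [psiM, Finset.mem_filter] at ha
      exact ha.2
    · exact (hX a ha).2
    · rw [Finset.mem_compl] at ha
      exact (hXc a ha).1
  · intro he
    have heE := mem_extE_of_mem G dangle hM'.1 he
    rcases heE with ⟨e₀, he₀, rfl⟩ | ⟨j, rfl⟩ | ⟨j, rfl⟩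
    · refine Or.inl (Or.inl ?_)
      rw [Finset.mem_image]
      exact ⟨e₀, by rw [psiM, Finset.mem_filter]; exact ⟨Finset.mem_univ _, he⟩, rfl⟩
    · refine Or.inl (Or.inr ?_)
      rw [Finset.mem_image]
      refine ⟨j, ?_, rfl⟩
      by_contra hj
      exact (hXc j hj).2 he
    · refine Or.inr ?_
      rw [Finset.mem_image]
      refine ⟨j, ?_, rfl⟩
      rw [Finset.mem_compl]
      intro hj
      exact (hX j hj).1 he

lemma isPM_psiM {M' : Finset (Sym2 (VExt V))}
    (hM' : IsPM (GExt G dangle) (dangleExt (V := V)) M' X) :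
    IsPM G dangle (psiM M') X := by
  constructor
  · intro e he
    rw [psiM, Finset.mem_filter] at he
    have heE := mem_extE_of_mem G dangle hM'.1 he.2
    rcases heE with ⟨e₀, he₀, heq⟩ | ⟨j, heq⟩ | ⟨j, heq⟩
    · rw [SimpleGraph.mem_edgeFinset]
      rwa [← Sym2.map.injective Sum.inl_injective heq]
    · exact absurd (heq ▸ (by simp [gB] : Sum.inr (j, false) ∈ gB dangle j))
        (inr_not_mem_map _ _)
    · exact absurd (heq ▸ (by simp [gC] : (Sum.inr (j, false) : VExt V) ∈ gC j))
        (inr_not_mem_map _ _)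
  · intro x
    have h1 := hM'.2 (Sum.inl x)
    rw [← phiM_psiM G dangle X hM'] at h1
    have h2 : edeg (phiM dangle X (psiM M')) (Sum.inl x)
        + (X.filter (fun i => dangleExt (V := V) i = Sum.inl x)).card = 1 := h1
    rw [edeg_phiM_inl, cntExt_inl] at h2
    show edeg (psiM M') x + (X.filter (fun i => dangle i = x)).card = 1
    omega

lemma prod_phiM (w : Sym2 V → ℝ) (M : Finset (Sym2 V)) :
    ∏ e ∈ phiM dangle X M, wExt w e = ∏ e ∈ M, w e := by
  rw [phiM, Finset.union_assoc,
    Finset.prod_union (Finset.disjoint_union_right.mpr ⟨disjAB dangle X M, disjAC X M⟩),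
    Finset.prod_union (disjBC dangle X)]
  rw [Finset.prod_image (fun x _ y _ h => Sym2.map.injective Sum.inl_injective h),
    Finset.prod_image (fun x _ y _ h => gB_injective dangle h),
    Finset.prod_image (fun x _ y _ h => gC_injective h)]
  rw [Finset.prod_congr rfl (fun e _ => wExt_map w e)]
  rw [Finset.prod_congr rfl (fun i _ => wExt_gB dangle w i),
    Finset.prod_congr rfl (fun i _ => wExt_gC (V := V) w i)]
  simp

lemma sig_ext (w : Sym2 V → ℝ) :
    matchgateSig (GExt G dangle) (wExt w) (dangleExt (V := V)) X
      = matchgateSig G w dangle X := by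
  rw [matchgateSig, matchgateSig]
  rw [← Finset.sum_filter, ← Finset.sum_filter]
  refine Finset.sum_nbij' (i := psiM) (j := phiM dangle X) ?_ ?_ ?_ ?_ ?_
  · intro M' hM'
    rw [Finset.mem_filter] at hM' ⊢
    exact ⟨Finset.mem_univ _, isPM_psiM G dangle X hM'.2⟩
  · intro M hM
    rw [Finset.mem_filter] at hM ⊢
    exact ⟨Finset.mem_univ _, isPM_phiM G dangle X hM.2⟩
  · intro M' hM'
    rw [Finset.mem_filter] at hM'
    exact phiM_psiM G dangle X hM'.2
  · intro M hM
    exact psiM_phiM dangle X M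
  · intro M' hM'
    rw [Finset.mem_filter] at hM'
    rw [← prod_phiM dangle X w (psiM M'), phiM_psiM G dangle X hM'.2]

lemma dangleExt_injective : Function.Injective (dangleExt (V := V)) := by
  intro i j h
  rw [dangleExt, dangleExt] at h
  exact congrArg Prod.fst (Sum.inr_injective h)

end Ext
end MGaux

open MGaux in
theorem matchgate_signature_inequality {V : Type} [DecidableEq V] (G : SimpleGraph V)
    [Fintype V] [DecidableRel G.Adj] (w : Sym2 V → ℝ) (dangle : Fin 4 → V)
    (hw : ∀ e, 0 ≤ w e)
    (heven : ∀ X : Finset (Fin 4), ¬ Even X.card → matchgateSig G w dangle X = 0) :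
    matchgateSig G w dangle {0, 1} * matchgateSig G w dangle {2, 3} ≤
      matchgateSig G w dangle {1, 2} * matchgateSig G w dangle {0, 3} +
      matchgateSig G w dangle {1, 3} * matchgateSig G w dangle {0, 2} +
      matchgateSig G w dangle ∅ * matchgateSig G w dangle Finset.univ := by
  rw [← sig_ext G dangle ({0,1} : Finset (Fin 4)) w,
    ← sig_ext G dangle ({2,3} : Finset (Fin 4)) w,
    ← sig_ext G dangle ({1,2} : Finset (Fin 4)) w,
    ← sig_ext G dangle ({0,3} : Finset (Fin 4)) w,
    ← sig_ext G dangle ({1,3} : Finset (Fin 4)) w,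
    ← sig_ext G dangle ({0,2} : Finset (Fin 4)) w,
    ← sig_ext G dangle (∅ : Finset (Fin 4)) w,
    ← sig_ext G dangle (Finset.univ : Finset (Fin 4)) w]
  exact core (GExt G dangle) (wExt w) (dangleExt (V := V))
    (wExt_nonneg w hw) (dangleExt_injective)
    (fun X hX => by rw [sig_ext G dangle X w]; exact heven X hX)
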